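/- In the setting of the 8-dimensional nilpotent Lie algebra with dη^j = 0 (j=1,2,3) and dη^4 = Σ a_k (basis 2-forms), assume a_8 = 0 and the astheno-Kähler condition |a_1|^2+|a_2|^2+|a_4|^2+|a_5|^2+|a_6|^2+|a_7|^2+|a_9|^2+|a_{10}|^2+|a_{11}|^2 = 2Re(a_3 ā_{12}). Then the fundamental form F = (i/2)Σ η^j ∧ η̄^j satisfies ∂∂̄F = 0 if and only if a_1 = a_4 = a_6 = a_7 = a_9 = a_{11} = 0. -/

import Mathlib

set_option maxHeartbeats 1600000

open ExteriorAlgebra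

noncomputable section Statement5Aux

/-- The `i`-th generator of the exterior algebra. -/
def sE (i : Fin 8) : ExteriorAlgebra ℂ (Fin 8 → ℂ) := ι ℂ (Pi.single i 1)

lemma sE_sq (i : Fin 8) : sE i * sE i = 0 := by unfold sE; exact ι_sq_zero _

lemma sE_sq' (i : Fin 8) (x : ExteriorAlgebra ℂ (Fin 8 → ℂ)) : sE i * (sE i * x) = 0 := by
  rw [← mul_assoc, sE_sq, zero_mul]

lemma sE_swap {i j : Fin 8} (_h : j < i) : sE i * sE j = -(sE j * sE i) := by
  have h2 := ι_add_mul_swap (R := ℂ) (M := Fin 8 → ℂ) (Pi.single i (1:ℂ)) (Pi.single j 1)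
  rw [eq_neg_iff_add_eq_zero]; exact h2

lemma sE_swap' {i j : Fin 8} (_h : j < i) (x : ExteriorAlgebra ℂ (Fin 8 → ℂ)) :
    sE i * (sE j * x) = -(sE j * (sE i * x)) := by
  rw [← mul_assoc, sE_swap _h, neg_mul, mul_assoc]

/-- The alternating "determinant of selected coordinates" map. -/
def detF (s : Fin 4 → Fin 8) : (Fin 8 → ℂ) [⋀^Fin 4]→ₗ[ℂ] ℂ :=
  (Matrix.detRowAlternating (R := ℂ)).compLinearMap (LinearMap.funLeft ℂ ℂ s)

/-- Coefficient-extracting linear functional on the exterior algebra. -/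
def coeff (s : Fin 4 → Fin 8) : ExteriorAlgebra ℂ (Fin 8 → ℂ) →ₗ[ℂ] ℂ :=
  liftAlternating fun n => match n with
    | 4 => detF s
    | _ => 0

lemma coeff_quad (s : Fin 4 → Fin 8) (a b c d : Fin 8) :
    coeff s (sE a * (sE b * (sE c * sE d))) =
      Matrix.det (Matrix.of fun i j =>
        (Pi.single (![a,b,c,d] i) (1:ℂ) : Fin 8 → ℂ) (s j)) := by
  have h : sE a * (sE b * (sE c * sE d)) =
      ιMulti ℂ 4 ![Pi.single a 1, Pi.single b 1, Pi.single c 1, Pi.single d 1] := by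
    simp [ιMulti_apply, sE, List.ofFn_succ]
  rw [h, coeff, liftAlternating_apply_ιMulti]
  show detF s _ = _
  simp only [detF, AlternatingMap.compLinearMap_apply]
  congr 1
  ext i j
  fin_cases i <;> simp [LinearMap.funLeft_apply, Matrix.vecHead, Matrix.vecTail]

lemma evA0 : coeff ![0,1,4,5] (sE 0 * (sE 1 * (sE 4 * sE 5))) = 1 := by
  rw [coeff_quad]
  simp (config := { decide := true }) [Matrix.det_succ_row_zero, Fin.sum_univ_succ,
    Pi.single_apply, Fin.succAbove, Fin.castSucc, Fin.castAdd, Fin.castLE]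

lemma evA1 : coeff ![0,1,4,5] (sE 0 * (sE 1 * (sE 4 * sE 6))) = 0 := by
  rw [coeff_quad]
  simp (config := { decide := true }) [Matrix.det_succ_row_zero, Fin.sum_univ_succ,
    Pi.single_apply, Fin.succAbove, Fin.castSucc, Fin.castAdd, Fin.castLE]

lemma evA2 : coeff ![0,1,4,5] (sE 0 * (sE 1 * (sE 5 * sE 6))) = 0 := by
  rw [coeff_quad]
  simp (config := { decide := true }) [Matrix.det_succ_row_zero, Fin.sum_univ_succ,
    Pi.single_apply, Fin.succAbove, Fin.castSucc, Fin.castAdd, Fin.castLE]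

lemma evA3 : coeff ![0,1,4,5] (sE 0 * (sE 2 * (sE 4 * sE 5))) = 0 := by
  rw [coeff_quad]
  simp (config := { decide := true }) [Matrix.det_succ_row_zero, Fin.sum_univ_succ,
    Pi.single_apply, Fin.succAbove, Fin.castSucc, Fin.castAdd, Fin.castLE]

lemma evA4 : coeff ![0,1,4,5] (sE 0 * (sE 2 * (sE 4 * sE 6))) = 0 := by
  rw [coeff_quad]
  simp (config := { decide := true }) [Matrix.det_succ_row_zero, Fin.sum_univ_succ,
    Pi.single_apply, Fin.succAbove, Fin.castSucc, Fin.castAdd, Fin.castLE]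

lemma evA5 : coeff ![0,1,4,5] (sE 0 * (sE 2 * (sE 5 * sE 6))) = 0 := by
  rw [coeff_quad]
  simp (config := { decide := true }) [Matrix.det_succ_row_zero, Fin.sum_univ_succ,
    Pi.single_apply, Fin.succAbove, Fin.castSucc, Fin.castAdd, Fin.castLE]

lemma evA6 : coeff ![0,1,4,5] (sE 1 * (sE 2 * (sE 4 * sE 5))) = 0 := by
  rw [coeff_quad]
  simp (config := { decide := true }) [Matrix.det_succ_row_zero, Fin.sum_univ_succ,
    Pi.single_apply, Fin.succAbove, Fin.castSucc, Fin.castAdd, Fin.castLE]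

lemma evA7 : coeff ![0,1,4,5] (sE 1 * (sE 2 * (sE 4 * sE 6))) = 0 := by
  rw [coeff_quad]
  simp (config := { decide := true }) [Matrix.det_succ_row_zero, Fin.sum_univ_succ,
    Pi.single_apply, Fin.succAbove, Fin.castSucc, Fin.castAdd, Fin.castLE]

lemma evA8 : coeff ![0,1,4,5] (sE 1 * (sE 2 * (sE 5 * sE 6))) = 0 := by
  rw [coeff_quad]
  simp (config := { decide := true }) [Matrix.det_succ_row_zero, Fin.sum_univ_succ,
    Pi.single_apply, Fin.succAbove, Fin.castSucc, Fin.castAdd, Fin.castLE]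

lemma evB0 : coeff ![1,2,5,6] (sE 0 * (sE 1 * (sE 4 * sE 5))) = 0 := by
  rw [coeff_quad]
  simp (config := { decide := true }) [Matrix.det_succ_row_zero, Fin.sum_univ_succ,
    Pi.single_apply, Fin.succAbove, Fin.castSucc, Fin.castAdd, Fin.castLE]

lemma evB1 : coeff ![1,2,5,6] (sE 0 * (sE 1 * (sE 4 * sE 6))) = 0 := by
  rw [coeff_quad]
  simp (config := { decide := true }) [Matrix.det_succ_row_zero, Fin.sum_univ_succ,
    Pi.single_apply, Fin.succAbove, Fin.castSucc, Fin.castAdd, Fin.castLE]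

lemma evB2 : coeff ![1,2,5,6] (sE 0 * (sE 1 * (sE 5 * sE 6))) = 0 := by
  rw [coeff_quad]
  simp (config := { decide := true }) [Matrix.det_succ_row_zero, Fin.sum_univ_succ,
    Pi.single_apply, Fin.succAbove, Fin.castSucc, Fin.castAdd, Fin.castLE]

lemma evB3 : coeff ![1,2,5,6] (sE 0 * (sE 2 * (sE 4 * sE 5))) = 0 := by
  rw [coeff_quad]
  simp (config := { decide := true }) [Matrix.det_succ_row_zero, Fin.sum_univ_succ,
    Pi.single_apply, Fin.succAbove, Fin.castSucc, Fin.castAdd, Fin.castLE]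

lemma evB4 : coeff ![1,2,5,6] (sE 0 * (sE 2 * (sE 4 * sE 6))) = 0 := by
  rw [coeff_quad]
  simp (config := { decide := true }) [Matrix.det_succ_row_zero, Fin.sum_univ_succ,
    Pi.single_apply, Fin.succAbove, Fin.castSucc, Fin.castAdd, Fin.castLE]

lemma evB5 : coeff ![1,2,5,6] (sE 0 * (sE 2 * (sE 5 * sE 6))) = 0 := by
  rw [coeff_quad]
  simp (config := { decide := true }) [Matrix.det_succ_row_zero, Fin.sum_univ_succ,
    Pi.single_apply, Fin.succAbove, Fin.castSucc, Fin.castAdd, Fin.castLE]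

lemma evB6 : coeff ![1,2,5,6] (sE 1 * (sE 2 * (sE 4 * sE 5))) = 0 := by
  rw [coeff_quad]
  simp (config := { decide := true }) [Matrix.det_succ_row_zero, Fin.sum_univ_succ,
    Pi.single_apply, Fin.succAbove, Fin.castSucc, Fin.castAdd, Fin.castLE]

lemma evB7 : coeff ![1,2,5,6] (sE 1 * (sE 2 * (sE 4 * sE 6))) = 0 := by
  rw [coeff_quad]
  simp (config := { decide := true }) [Matrix.det_succ_row_zero, Fin.sum_univ_succ,
    Pi.single_apply, Fin.succAbove, Fin.castSucc, Fin.castAdd, Fin.castLE]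

lemma evB8 : coeff ![1,2,5,6] (sE 1 * (sE 2 * (sE 5 * sE 6))) = 1 := by
  rw [coeff_quad]
  simp (config := { decide := true }) [Matrix.det_succ_row_zero, Fin.sum_univ_succ,
    Pi.single_apply, Fin.succAbove, Fin.castSucc, Fin.castAdd, Fin.castLE]

end Statement5Aux

theorem statement5
    (a₁ a₂ a₃ a₄ a₅ a₆ a₇ a₉ a₁₀ a₁₁ a₁₂ : ℂ)
    (hAK : Complex.normSq a₁ + Complex.normSq a₂ + Complex.normSq a₄ + Complex.normSq a₅
        + Complex.normSq a₆ + Complex.normSq a₇ + Complex.normSq a₉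
        + Complex.normSq a₁₀ + Complex.normSq a₁₁
      = 2 * (a₃ * (starRingEnd ℂ) a₁₂).re)
    (g : Fin 8 → ExteriorAlgebra ℂ (Fin 8 → ℂ))
    (hg : ∀ i, g i = ExteriorAlgebra.ι ℂ (Pi.single i 1))
    (p q : ExteriorAlgebra ℂ (Fin 8 → ℂ) →ₗ[ℂ] ExteriorAlgebra ℂ (Fin 8 → ℂ))
    (hpLeib : ∀ i, ∀ y, p (g i * y) = p (g i) * y - g i * p y)
    (hqLeib : ∀ i, ∀ y, q (g i * y) = q (g i) * y - g i * q y)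
    (hp1 : p (g 0) = 0) (hp2 : p (g 1) = 0) (hp3 : p (g 2) = 0)
    (hp4 : p (g 3) = a₁ • (g 0 * g 1) + a₂ • (g 0 * g 2) + a₆ • (g 1 * g 2))
    (hq1 : q (g 0) = 0) (hq2 : q (g 1) = 0) (hq3 : q (g 2) = 0)
    (hq4 : q (g 3) = a₃ • (g 0 * g 4) + a₄ • (g 0 * g 5) + a₅ • (g 0 * g 6)
      + a₇ • (g 1 * g 4) + a₉ • (g 1 * g 6)
      + a₁₀ • (g 2 * g 4) + a₁₁ • (g 2 * g 5) + a₁₂ • (g 2 * g 6))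
    (hpb1 : p (g 4) = 0) (hpb2 : p (g 5) = 0) (hpb3 : p (g 6) = 0)
    (hpb4 : p (g 7) = (starRingEnd ℂ) a₃ • (g 4 * g 0) + (starRingEnd ℂ) a₄ • (g 4 * g 1)
      + (starRingEnd ℂ) a₅ • (g 4 * g 2)
      + (starRingEnd ℂ) a₇ • (g 5 * g 0) + (starRingEnd ℂ) a₉ • (g 5 * g 2)
      + (starRingEnd ℂ) a₁₀ • (g 6 * g 0) + (starRingEnd ℂ) a₁₁ • (g 6 * g 1)
      + (starRingEnd ℂ) a₁₂ • (g 6 * g 2))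
    (hqb1 : q (g 4) = 0) (hqb2 : q (g 5) = 0) (hqb3 : q (g 6) = 0)
    (hqb4 : q (g 7) = (starRingEnd ℂ) a₁ • (g 4 * g 5) + (starRingEnd ℂ) a₂ • (g 4 * g 6)
      + (starRingEnd ℂ) a₆ • (g 5 * g 6))
    (F : ExteriorAlgebra ℂ (Fin 8 → ℂ))
    (hF : F = (Complex.I / 2) • (g 0 * g 4 + g 1 * g 5 + g 2 * g 6 + g 3 * g 7)) :
    p (q F) = 0 ↔ (a₁ = 0 ∧ a₄ = 0 ∧ a₆ = 0 ∧ a₇ = 0 ∧ a₉ = 0 ∧ a₁₁ = 0) := by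
  have hge : g = sE := funext fun i => (hg i)
  subst hge
  subst hF
  have h04 : q (sE 0 * sE 4) = 0 := by rw [hqLeib, hq1, hqb1]; simp
  have h15 : q (sE 1 * sE 5) = 0 := by rw [hqLeib, hq2, hqb2]; simp
  have h26 : q (sE 2 * sE 6) = 0 := by rw [hqLeib, hq3, hqb3]; simp
  have hpt : ∀ i j : Fin 8, p (sE i) = 0 → p (sE j) = 0 →
      p (sE i * (sE j * sE 7)) = sE i * (sE j * p (sE 7)) := by
    intro i j hi hj; rw [hpLeib, hpLeib, hi, hj]; simp
  have hpp : ∀ i j : Fin 8, p (sE i) = 0 → p (sE j) = 0 → p (sE i * sE j) = 0 := by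
    intro i j hi hj; rw [hpLeib, hi, hj]; simp
  have hkey : p (q ((Complex.I / 2) • (sE 0 * sE 4 + sE 1 * sE 5 + sE 2 * sE 6 + sE 3 * sE 7)))
      = (Complex.I / 2) • (p (q (sE 3) * sE 7) - p (sE 3 * q (sE 7))) := by
    rw [map_smul, map_add, map_add, map_add, h04, h15, h26, hqLeib,
      zero_add, zero_add, zero_add, map_smul, map_sub]
  have hA : p (q (sE 3) * sE 7) =
      a₃ • (sE 0 * (sE 4 * p (sE 7))) + a₄ • (sE 0 * (sE 5 * p (sE 7)))
      + a₅ • (sE 0 * (sE 6 * p (sE 7))) + a₇ • (sE 1 * (sE 4 * p (sE 7)))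
      + a₉ • (sE 1 * (sE 6 * p (sE 7))) + a₁₀ • (sE 2 * (sE 4 * p (sE 7)))
      + a₁₁ • (sE 2 * (sE 5 * p (sE 7))) + a₁₂ • (sE 2 * (sE 6 * p (sE 7))) := by
    rw [hq4]
    simp only [add_mul, smul_mul_assoc, mul_assoc, map_add, map_smul,
      hpt 0 4 hp1 hpb1, hpt 0 5 hp1 hpb2, hpt 0 6 hp1 hpb3,
      hpt 1 4 hp2 hpb1, hpt 1 6 hp2 hpb3,
      hpt 2 4 hp3 hpb1, hpt 2 5 hp3 hpb2, hpt 2 6 hp3 hpb3]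
  have hB : p (sE 3 * q (sE 7)) = p (sE 3) * q (sE 7) := by
    rw [hpLeib, hqb4]
    simp only [map_add, map_smul, hpp 4 5 hpb1 hpb2, hpp 4 6 hpb1 hpb3, hpp 5 6 hpb2 hpb3,
      smul_zero, add_zero, mul_zero, sub_zero]
  rw [hkey, hA, hB, hpb4, hp4, hqb4]
  simp (config := { decide := true }) only [mul_add, add_mul, mul_smul_comm, smul_mul_assoc,
    smul_add, smul_smul, smul_neg, mul_assoc, neg_mul, mul_neg, neg_neg, smul_zero, mul_zero,
    zero_mul, add_zero, zero_add, neg_zero, sE_sq, sE_sq', sE_swap, sE_swap',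
    neg_add_rev, sub_eq_add_neg]
  constructor
  · intro h
    have h1 := congrArg (coeff ![0,1,4,5]) h
    have h2 := congrArg (coeff ![1,2,5,6]) h
    simp only [map_add, map_neg, map_smul, map_zero, smul_eq_mul,
      evA0, evA1, evA2, evA3, evA4, evA5, evA6, evA7, evA8,
      evB0, evB1, evB2, evB3, evB4, evB5, evB6, evB7, evB8,
      mul_zero, mul_one, zero_add, add_zero, neg_zero, neg_neg, mul_neg, neg_mul] at h1 h2
    have k1 : a₁ * (starRingEnd ℂ) a₁ + a₄ * (starRingEnd ℂ) a₄ + a₇ * (starRingEnd ℂ) a₇ = 0 := by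
      linear_combination (2 * Complex.I) * h1 + (a₁ * (starRingEnd ℂ) a₁
        + a₄ * (starRingEnd ℂ) a₄ + a₇ * (starRingEnd ℂ) a₇) * Complex.I_sq
    have k2 : a₆ * (starRingEnd ℂ) a₆ + a₉ * (starRingEnd ℂ) a₉
        + a₁₁ * (starRingEnd ℂ) a₁₁ = 0 := by
      linear_combination (2 * Complex.I) * h2 + (a₆ * (starRingEnd ℂ) a₆
        + a₉ * (starRingEnd ℂ) a₉ + a₁₁ * (starRingEnd ℂ) a₁₁) * Complex.I_sq
    rw [Complex.mul_conj, Complex.mul_conj, Complex.mul_conj] at k1 k2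
    have r1 : Complex.normSq a₁ + Complex.normSq a₄ + Complex.normSq a₇ = 0 := by
      exact_mod_cast k1
    have r2 : Complex.normSq a₆ + Complex.normSq a₉ + Complex.normSq a₁₁ = 0 := by
      exact_mod_cast k2
    have n1 := Complex.normSq_nonneg a₁
    have n4 := Complex.normSq_nonneg a₄
    have n7 := Complex.normSq_nonneg a₇
    have n6 := Complex.normSq_nonneg a₆
    have n9 := Complex.normSq_nonneg a₉
    have n11 := Complex.normSq_nonneg a₁₁
    refine ⟨?_, ?_, ?_, ?_, ?_, ?_⟩ <;>
      [ exact Complex.normSq_eq_zero.mp (by linarith);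
        exact Complex.normSq_eq_zero.mp (by linarith);
        exact Complex.normSq_eq_zero.mp (by linarith);
        exact Complex.normSq_eq_zero.mp (by linarith);
        exact Complex.normSq_eq_zero.mp (by linarith);
        exact Complex.normSq_eq_zero.mp (by linarith)]
  · rintro ⟨rfl, rfl, rfl, rfl, rfl, rfl⟩
    simp only [Complex.normSq_zero, zero_add, add_zero, map_zero, zero_smul, neg_zero,
      zero_mul, mul_zero, smul_zero] at hAK ⊢
    have hAKC : a₂ * (starRingEnd ℂ) a₂ + a₅ * (starRingEnd ℂ) a₅
        + a₁₀ * (starRingEnd ℂ) a₁₀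
        = a₃ * (starRingEnd ℂ) a₁₂ + a₁₂ * (starRingEnd ℂ) a₃ := by
      have h3 := Complex.add_conj (a₃ * (starRingEnd ℂ) a₁₂)
      rw [map_mul, Complex.conj_conj] at h3
      rw [Complex.mul_conj, Complex.mul_conj, Complex.mul_conj,
        ← Complex.ofReal_add, ← Complex.ofReal_add, hAK]
      linear_combination -h3
    match_scalars
    any_goals ring
    all_goals linear_combination (-(Complex.I/2)) * hAKC
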